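/- arXiv:1604.08000 — 2 statements merged into one kernel-verified Lean document; each statement's English description precedes it below -/
import Mathlib

section
/- Let M be a prime, let χ be a nontrivial Dirichlet character modulo M, let w be an integer with gcd(w, M) = 1, and let v be any integer. Then ∑_{a mod M} χ(a) · S(w·a, w·v; M) · e_M( −w·(a + v) ) = χ̄(w) · g_χ · D_χ(w·v; M), where χ̄ is the complex conjugate character of χ. -/
open Complex

/-- `eAdd q x = exp(2πi x / q)`. -/
noncomputable def eAdd (q : ℕ) (x : ℤ) : ℂ :=
  Complex.exp (2 * Real.pi * Complex.I * x / q)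

/-- The Kloosterman sum `S(m, n; q) = ∑_{x mod q, (x,q)=1} e_q(m x + n x*)`. -/
noncomputable def klo (m n : ℤ) (q : ℕ) [NeZero q] : ℂ :=
  ∑ x : (ZMod q)ˣ,
    eAdd q (m * ((x : ZMod q).val : ℤ) + n * (((x⁻¹ : (ZMod q)ˣ) : ZMod q).val : ℤ))

/-- The twisted Kloosterman sum `S_ψ(m, n; q)` for a Dirichlet character `ψ` mod `d`, `d ∣ q`. -/
noncomputable def kloTwist {d : ℕ} (ψ : DirichletCharacter ℂ d) (m n : ℤ) (q : ℕ)
    [NeZero q] (h : d ∣ q) : ℂ :=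
  ∑ x : (ZMod q)ˣ,
    ψ (ZMod.castHom h (ZMod d) (x : ZMod q)) *
      eAdd q (m * ((x : ZMod q).val : ℤ) + n * (((x⁻¹ : (ZMod q)ˣ) : ZMod q).val : ℤ))

/-- The Gauss sum `g_χ = ∑_{a mod M} χ(a) e_M(a)`. -/
noncomputable def gaussS {M : ℕ} [NeZero M] (χ : DirichletCharacter ℂ M) : ℂ :=
  ∑ a : ZMod M, χ a * eAdd M (a.val : ℤ)

/-- `D_χ(u; M) = ∑_{b mod M, (b(b−1),M)=1} χ̄(b−1) e_M((b* − 1) u)`. -/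
noncomputable def dSum {M : ℕ} [NeZero M] (χ : DirichletCharacter ℂ M) (u : ℤ) : ℂ :=
  ∑ b ∈ Finset.univ.filter (fun b : ZMod M => Nat.gcd (b * (b - 1)).val M = 1),
    (starRingEnd ℂ) (χ (b - 1)) * eAdd M (((b⁻¹ - 1 : ZMod M).val : ℤ) * u)

section Helpers

variable (M : ℕ) [NeZero M]

lemma eAdd_add (x y : ℤ) : eAdd M (x + y) = eAdd M x * eAdd M y := by
  unfold eAdd
  rw [← Complex.exp_add]
  congr 1
  push_cast
  ring

lemma eAdd_self_mul (k : ℤ) : eAdd M ((M : ℤ) * k) = 1 := by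
  unfold eAdd
  have hM : (M : ℂ) ≠ 0 := Nat.cast_ne_zero.mpr (NeZero.ne M)
  have h : 2 * (Real.pi : ℂ) * Complex.I * ((M : ℤ) * k) / M
      = (k : ℤ) * (2 * Real.pi * Complex.I) := by
    field_simp
    rw [Int.cast_natCast]
    ring
  push_cast
  push_cast at h
  rw [h, Complex.exp_int_mul_two_pi_mul_I]

lemma eAdd_congr {x y : ℤ} (h : (x : ZMod M) = (y : ZMod M)) : eAdd M x = eAdd M y := by
  rw [ZMod.intCast_eq_intCast_iff] at h
  obtain ⟨k, hk⟩ := h.dvd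
  have : y = x + (M : ℤ) * k := by linarith
  rw [this, eAdd_add, eAdd_self_mul, mul_one]

/-- The standard additive character mod `M` in terms of `eAdd`. -/
noncomputable def psi : AddChar (ZMod M) ℂ where
  toFun z := eAdd M (z.val : ℤ)
  map_zero_eq_one' := by simp [eAdd]
  map_add_eq_mul' a b := by
    rw [← eAdd_add]
    exact eAdd_congr M (by push_cast [ZMod.natCast_val, ZMod.cast_id]; rfl)

lemma psi_apply (z : ZMod M) : psi M z = eAdd M (z.val : ℤ) := rfl

lemma psi_intCast (x : ℤ) : psi M ((x : ZMod M)) = eAdd M x := by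
  rw [psi_apply]
  exact eAdd_congr M (by push_cast [ZMod.natCast_val, ZMod.cast_id]; rfl)

end Helpers

section Gauss

variable (M : ℕ) [Fact M.Prime]

lemma gauss_twist (χ : DirichletCharacter ℂ M) (hχ : χ ≠ 1) (t : ZMod M) :
    ∑ a : ZMod M, χ a * psi M (t * a) = χ⁻¹ t * gaussSum χ (psi M) := by
  rcases eq_or_ne t 0 with rfl | ht
  · simp only [zero_mul, AddChar.map_zero_eq_one, mul_one]
    rw [MulChar.sum_eq_zero_of_ne_one hχ, MulChar.map_zero, zero_mul]
  · have hu : IsUnit t := isUnit_iff_ne_zero.mpr ht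
    have key := gaussSum_mulShift χ (psi M) hu.unit
    have h1 : gaussSum χ (AddChar.mulShift (psi M) hu.unit)
        = ∑ a : ZMod M, χ a * psi M (t * a) := by
      simp [gaussSum, AddChar.mulShift_apply]
    rw [h1] at key
    have hmul : χ⁻¹ t * χ t = 1 := by
      have h := DFunLike.congr_fun χ.inv_mul t
      rwa [MulChar.coeToFun_mul, Pi.mul_apply, MulChar.one_apply hu] at h
    have hne : χ t ≠ 0 := fun h0 => by simp [h0] at hmul
    rw [IsUnit.unit_spec] at key
    rw [MulChar.inv_apply_eq_inv']
    field_simp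
    rw [mul_comm] at key
    exact key

end Gauss

section DSum
set_option maxHeartbeats 1000000


set_option maxHeartbeats 1000000 in
lemma dSum_eq (M : ℕ) [Fact M.Prime] (χ : DirichletCharacter ℂ M) (u : ℤ) :
    dSum χ u = ∑ x : (ZMod M)ˣ,
      χ⁻¹ ((x : ZMod M) - 1) * psi M ((((x⁻¹ : (ZMod M)ˣ) : ZMod M) - 1) * (u : ZMod M)) := by
  classical
  have hfil : ∀ b : ZMod M, (Nat.gcd (b * (b - 1)).val M = 1) ↔ (IsUnit b ∧ b ≠ 1) := by
    intro b
    have hcast : (((b * (b - 1)).val : ℕ) : ZMod M) = b * (b - 1) := by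
      rw [ZMod.natCast_val, ZMod.cast_id]
    rw [show (Nat.gcd (b * (b - 1)).val M = 1) ↔ Nat.Coprime (b * (b - 1)).val M from Iff.rfl,
      ← ZMod.isUnit_iff_coprime, hcast, IsUnit.mul_iff]
    constructor
    · rintro ⟨h1, h2⟩
      exact ⟨h1, fun h => by simp [h] at h2⟩
    · rintro ⟨h1, h2⟩
      exact ⟨h1, isUnit_iff_ne_zero.mpr (sub_ne_zero.mpr h2)⟩
  have hset : Finset.univ.filter (fun b : ZMod M => Nat.gcd (b * (b - 1)).val M = 1)
      = Finset.univ.filter (fun b : ZMod M => IsUnit b ∧ b ≠ 1) := by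
    ext b; simp only [Finset.mem_filter, Finset.mem_univ, true_and, hfil b]
  have hsub : ∑ b ∈ Finset.univ.filter (fun b : ZMod M => IsUnit b ∧ b ≠ 1),
        (starRingEnd ℂ) (χ (b - 1)) * eAdd M (((b⁻¹ - 1 : ZMod M).val : ℤ) * u)
      = ∑ b ∈ Finset.univ.filter (fun b : ZMod M => IsUnit b),
        (starRingEnd ℂ) (χ (b - 1)) * eAdd M (((b⁻¹ - 1 : ZMod M).val : ℤ) * u) := by
    refine Finset.sum_subset (fun b hb => ?_) ?_
    · simp only [Finset.mem_filter] at hb ⊢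
      exact ⟨hb.1, hb.2.1⟩
    · intro b hb hnb
      have hb1 : b = 1 := by
        by_contra h
        exact hnb (Finset.mem_filter.mpr ⟨Finset.mem_univ _,
          ⟨(Finset.mem_filter.mp hb).2, h⟩⟩)
      simp [hb1, MulChar.map_zero]
  have hbij : ∑ b ∈ Finset.univ.filter (fun b : ZMod M => IsUnit b),
        (starRingEnd ℂ) (χ (b - 1)) * eAdd M (((b⁻¹ - 1 : ZMod M).val : ℤ) * u)
      = ∑ x : (ZMod M)ˣ,
        (starRingEnd ℂ) (χ ((x : ZMod M) - 1))
          * eAdd M (((((x : ZMod M))⁻¹ - 1 : ZMod M).val : ℤ) * u) := by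
    refine Finset.sum_bij' (fun b hb => ((Finset.mem_filter.mp hb).2).unit)
      (fun x _ => (x : ZMod M)) (fun b hb => Finset.mem_univ _)
      (fun x _ => Finset.mem_filter.mpr ⟨Finset.mem_univ _, x.isUnit⟩)
      (fun b hb => IsUnit.unit_spec _) (fun x _ => Units.ext (IsUnit.unit_spec _))
      (fun b hb => by rw [IsUnit.unit_spec])
  rw [dSum, hset, hsub, hbij]
  refine Finset.sum_congr rfl fun x _ => ?_
  rw [ZMod.inv_coe_unit]
  congr 1
  · rw [starRingEnd_apply]
    exact MulChar.star_apply' χ _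
  · rw [← psi_intCast M]
    congr 1
    push_cast [ZMod.natCast_val, ZMod.cast_id]
    rfl


/-- Evaluation of the twisted character sum modulo a prime `M`. -/
theorem stmt_3 (M : ℕ) [Fact M.Prime] (χ : DirichletCharacter ℂ M) (hχ : χ ≠ 1)
    (w : ℤ) (hw : Int.gcd w M = 1) (v : ℤ) :
    ∑ a : ZMod M, χ a * klo (w * (a.val : ℤ)) (w * v) M * eAdd M (-(w * ((a.val : ℤ) + v))) =
      (starRingEnd ℂ) (χ ((w : ZMod M))) * gaussS χ * dSum χ (w * v) := by
  classical
  have step1 : ∀ a : ZMod M,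
      χ a * klo (w * (a.val : ℤ)) (w * v) M * eAdd M (-(w * ((a.val : ℤ) + v)))
      = ∑ x : (ZMod M)ˣ, χ a * (psi M (((w : ZMod M) * ((x : ZMod M) - 1)) * a)
          * psi M ((((x⁻¹ : (ZMod M)ˣ) : ZMod M) - 1) * ((w * v : ℤ) : ZMod M))) := by
    intro a
    simp only [klo]
    rw [Finset.mul_sum, Finset.sum_mul]
    refine Finset.sum_congr rfl fun x _ => ?_
    rw [mul_assoc]
    congr 1
    rw [← eAdd_add M, ← psi_intCast M, ← AddChar.map_add_eq_mul]
    congr 1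
    push_cast [ZMod.natCast_val, ZMod.cast_id]
    ring
  calc
    ∑ a : ZMod M, χ a * klo (w * (a.val : ℤ)) (w * v) M * eAdd M (-(w * ((a.val : ℤ) + v)))
        = ∑ a : ZMod M, ∑ x : (ZMod M)ˣ, χ a * (psi M (((w : ZMod M) * ((x : ZMod M) - 1)) * a)
            * psi M ((((x⁻¹ : (ZMod M)ˣ) : ZMod M) - 1) * ((w * v : ℤ) : ZMod M))) :=
      Finset.sum_congr rfl fun a _ => step1 a
    _ = ∑ x : (ZMod M)ˣ, ∑ a : ZMod M, χ a * (psi M (((w : ZMod M) * ((x : ZMod M) - 1)) * a)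
            * psi M ((((x⁻¹ : (ZMod M)ˣ) : ZMod M) - 1) * ((w * v : ℤ) : ZMod M))) :=
      Finset.sum_comm
    _ = ∑ x : (ZMod M)ˣ, (χ⁻¹ ((w : ZMod M) * ((x : ZMod M) - 1)) * gaussSum χ (psi M))
          * psi M ((((x⁻¹ : (ZMod M)ˣ) : ZMod M) - 1) * ((w * v : ℤ) : ZMod M)) := by
      refine Finset.sum_congr rfl fun x _ => ?_
      rw [← gauss_twist M χ hχ, Finset.sum_mul]
      refine Finset.sum_congr rfl fun a _ => ?_
      ring
    _ = χ⁻¹ ((w : ZMod M)) * gaussSum χ (psi M) * ∑ x : (ZMod M)ˣ,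
          χ⁻¹ ((x : ZMod M) - 1)
            * psi M ((((x⁻¹ : (ZMod M)ˣ) : ZMod M) - 1) * ((w * v : ℤ) : ZMod M)) := by
      rw [Finset.mul_sum]
      refine Finset.sum_congr rfl fun x _ => ?_
      rw [map_mul]
      ring
    _ = (starRingEnd ℂ) (χ ((w : ZMod M))) * gaussS χ * dSum χ (w * v) := by
      rw [dSum_eq, starRingEnd_apply, MulChar.star_apply']
      rfl
end DSum
end

section
/- (Twisted multiplicativity of Kloosterman sums.) Let q₁, q₂ be coprime positive integers, let d be a positive integer with d | q₁, and let ψ be a Dirichlet character modulo d. Then for all integers m, n, S_ψ(m, n; q₁·q₂) = S_ψ(m·q̄₂, n·q̄₂; q₁) · S(m·q̄₁, n·q̄₁; q₂), where q̄₂ denotes an integer inverse of q₂ modulo q₁ and q̄₁ denotes an integer inverse of q₁ modulo q₂. -/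
open Complex

lemma eAdd_add_s10 (q : ℕ) (a b : ℤ) : eAdd q (a + b) = eAdd q a * eAdd q b := by
  rw [eAdd, eAdd, eAdd, ← Complex.exp_add]
  congr 1
  push_cast
  ring

lemma eAdd_int_mul (q : ℕ) (hq : q ≠ 0) (k : ℤ) : eAdd q (q * k) = 1 := by
  rw [eAdd]
  have hq' : (q : ℂ) ≠ 0 := Nat.cast_ne_zero.mpr hq
  have : 2 * (Real.pi : ℂ) * Complex.I * (((q : ℤ) * k : ℤ) : ℂ) / q
      = k * (2 * Real.pi * Complex.I) := by
    push_cast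
    field_simp
  rw [this, Complex.exp_int_mul_two_pi_mul_I]

lemma eAdd_congr_s10 (q : ℕ) (hq : q ≠ 0) {a b : ℤ} (h : (a : ZMod q) = (b : ZMod q)) :
    eAdd q a = eAdd q b := by
  have : (q : ℤ) ∣ a - b := by
    rwa [← ZMod.intCast_zmod_eq_zero_iff_dvd, Int.cast_sub, sub_eq_zero]
  obtain ⟨k, hk⟩ := this
  have : a = b + q * k := by omega
  rw [this, eAdd_add_s10, eAdd_int_mul q hq, mul_one]

lemma eAdd_mul_left (q₁ q₂ : ℕ) (hq₂ : q₂ ≠ 0) (a : ℤ) :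
    eAdd (q₁ * q₂) (q₂ * a) = eAdd q₁ a := by
  rcases Nat.eq_zero_or_pos q₁ with h | h
  · subst h; simp [eAdd]
  rw [eAdd, eAdd]
  congr 1
  have h1 : (q₁ : ℂ) ≠ 0 := Nat.cast_ne_zero.mpr h.ne'
  have h2 : (q₂ : ℂ) ≠ 0 := Nat.cast_ne_zero.mpr hq₂
  field_simp
  push_cast
  ring

lemma eAdd_split (q₁ q₂ : ℕ) [NeZero q₁] [NeZero q₂] (hco : Nat.Coprime q₁ q₂)
    (b₂ : ℤ) (hb₂ : (((q₂ : ℤ) * b₂ : ℤ) : ZMod q₁) = 1)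
    (b₁ : ℤ) (hb₁ : (((q₁ : ℤ) * b₁ : ℤ) : ZMod q₂) = 1) (a : ℤ) :
    eAdd (q₁ * q₂) a = eAdd q₁ (b₂ * a) * eAdd q₂ (b₁ * a) := by
  have h1 : q₁ ≠ 0 := NeZero.ne q₁
  have h2 : q₂ ≠ 0 := NeZero.ne q₂
  have e1 : eAdd q₁ (b₂ * a) = eAdd (q₁ * q₂) (q₂ * (b₂ * a)) :=
    (eAdd_mul_left q₁ q₂ h2 _).symm
  have e2 : eAdd q₂ (b₁ * a) = eAdd (q₁ * q₂) (q₁ * (b₁ * a)) := by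
    rw [mul_comm q₁ q₂]
    exact (eAdd_mul_left q₂ q₁ h1 _).symm
  rw [e1, e2, ← eAdd_add_s10]
  apply eAdd_congr_s10 _ (by positivity)
  symm
  have d1 : (q₁ : ℤ) ∣ (q₂ : ℤ) * b₂ - 1 := by
    rwa [← ZMod.intCast_zmod_eq_zero_iff_dvd, Int.cast_sub, sub_eq_zero, Int.cast_one]
  have d2 : (q₂ : ℤ) ∣ (q₁ : ℤ) * b₁ - 1 := by
    rwa [← ZMod.intCast_zmod_eq_zero_iff_dvd, Int.cast_sub, sub_eq_zero, Int.cast_one]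
  have dvd : ((q₁ * q₂ : ℕ) : ℤ) ∣ ((q₂ : ℤ) * b₂ + (q₁ : ℤ) * b₁ - 1) := by
    push_cast
    refine (Nat.isCoprime_iff_coprime.mpr hco).mul_dvd ?_ ?_
    · exact (dvd_add d1 (Dvd.intro b₁ rfl)).trans (by ring_nf; exact dvd_refl _)
    · exact (dvd_add d2 (Dvd.intro b₂ rfl)).trans (by ring_nf; exact dvd_refl _)
  have key : (((q₂ : ℤ) * b₂ + (q₁ : ℤ) * b₁ : ℤ) : ZMod (q₁ * q₂)) = 1 := by
    have := (ZMod.intCast_zmod_eq_zero_iff_dvd _ _).mpr dvd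
    push_cast at this ⊢
    linear_combination this
  calc ((q₂ * (b₂ * a) + q₁ * (b₁ * a) : ℤ) : ZMod (q₁ * q₂))
      = (((q₂ : ℤ) * b₂ + (q₁ : ℤ) * b₁ : ℤ) : ZMod (q₁ * q₂)) * a := by push_cast; ring
    _ = (a : ZMod (q₁ * q₂)) := by rw [key, one_mul]

/-- Twisted multiplicativity of Kloosterman sums. -/
theorem stmt_10 (q₁ q₂ : ℕ) [NeZero q₁] [NeZero q₂] (hco : Nat.Coprime q₁ q₂)
    (d : ℕ) (hd : d ∣ q₁) (ψ : DirichletCharacter ℂ d) (m n : ℤ)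
    (b₂ : ℤ) (hb₂ : (((q₂ : ℤ) * b₂ : ℤ) : ZMod q₁) = 1)
    (b₁ : ℤ) (hb₁ : (((q₁ : ℤ) * b₁ : ℤ) : ZMod q₂) = 1) :
    kloTwist ψ m n (q₁ * q₂) (hd.mul_right q₂) =
      kloTwist ψ (m * b₂) (n * b₂) q₁ hd * klo (m * b₁) (n * b₁) q₂ := by
  classical
  have h1 : q₁ ≠ 0 := NeZero.ne q₁
  have h2 : q₂ ≠ 0 := NeZero.ne q₂
  set e : (ZMod (q₁ * q₂))ˣ ≃* (ZMod q₁)ˣ × (ZMod q₂)ˣ :=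
    (Units.mapEquiv (ZMod.chineseRemainder hco).toMulEquiv).trans MulEquiv.prodUnits with he
  -- component facts
  have F1 : ∀ x : (ZMod (q₁ * q₂))ˣ, ((e x).1 : ZMod q₁) =
      ZMod.castHom (dvd_mul_right q₁ q₂) (ZMod q₁) (x : ZMod (q₁ * q₂)) := by
    intro x
    have h : ((RingHom.fst (ZMod q₁) (ZMod q₂)).comp
        ((ZMod.chineseRemainder hco) : ZMod (q₁ * q₂) →+* (ZMod q₁ × ZMod q₂))) =
        ZMod.castHom (dvd_mul_right q₁ q₂) (ZMod q₁) := RingHom.ext_zmod _ _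
    rw [← h]; rfl
  have F2 : ∀ x : (ZMod (q₁ * q₂))ˣ, ((e x).2 : ZMod q₂) =
      ZMod.castHom (dvd_mul_left q₂ q₁) (ZMod q₂) (x : ZMod (q₁ * q₂)) := by
    intro x
    have h : ((RingHom.snd (ZMod q₁) (ZMod q₂)).comp
        ((ZMod.chineseRemainder hco) : ZMod (q₁ * q₂) →+* (ZMod q₁ × ZMod q₂))) =
        ZMod.castHom (dvd_mul_left q₂ q₁) (ZMod q₂) := RingHom.ext_zmod _ _
    rw [← h]; rfl
  rw [kloTwist, kloTwist, klo, Finset.sum_mul_sum, ← Fintype.sum_prod_type']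
  apply Fintype.sum_equiv e.toEquiv
  intro x
  have hinv1 : (((e x).1⁻¹ : (ZMod q₁)ˣ) : ZMod q₁) =
      ZMod.castHom (dvd_mul_right q₁ q₂) (ZMod q₁) ((x⁻¹ : (ZMod (q₁ * q₂))ˣ) : ZMod (q₁ * q₂)) := by
    have : (e x).1⁻¹ = (e x⁻¹).1 := by rw [map_inv]; rfl
    rw [this, F1]
  have hinv2 : (((e x).2⁻¹ : (ZMod q₂)ˣ) : ZMod q₂) =
      ZMod.castHom (dvd_mul_left q₂ q₁) (ZMod q₂) ((x⁻¹ : (ZMod (q₁ * q₂))ˣ) : ZMod (q₁ * q₂)) := by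
    have : (e x).2⁻¹ = (e x⁻¹).2 := by rw [map_inv]; rfl
    rw [this, F2]
  -- ψ factor
  have hpsi : ψ (ZMod.castHom hd (ZMod d) ((e x).1 : ZMod q₁)) =
      ψ (ZMod.castHom (hd.mul_right q₂) (ZMod d) (x : ZMod (q₁ * q₂))) := by
    rw [F1]
    have h : (ZMod.castHom hd (ZMod d)).comp (ZMod.castHom (dvd_mul_right q₁ q₂) (ZMod q₁)) =
        ZMod.castHom (hd.mul_right q₂) (ZMod d) := RingHom.ext_zmod _ _
    rw [← h]; rfl
  -- value congruences mod q₁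
  have v1 : ((((x : ZMod (q₁ * q₂)).val : ℕ)) : ZMod q₁) = ((((e x).1 : ZMod q₁).val : ℕ) : ZMod q₁) := by
    rw [ZMod.natCast_val, ZMod.natCast_val, ZMod.cast_id, F1]
    exact (ZMod.castHom_apply _).symm
  have w1 : ((((x⁻¹ : (ZMod (q₁ * q₂))ˣ) : ZMod (q₁ * q₂)).val : ℕ) : ZMod q₁) =
      (((((e x).1⁻¹ : (ZMod q₁)ˣ) : ZMod q₁).val : ℕ) : ZMod q₁) := by
    rw [ZMod.natCast_val, ZMod.natCast_val, ZMod.cast_id, hinv1]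
    exact (ZMod.castHom_apply _).symm
  have v2 : ((((x : ZMod (q₁ * q₂)).val : ℕ)) : ZMod q₂) = ((((e x).2 : ZMod q₂).val : ℕ) : ZMod q₂) := by
    rw [ZMod.natCast_val, ZMod.natCast_val, ZMod.cast_id, F2]
    exact (ZMod.castHom_apply _).symm
  have w2 : ((((x⁻¹ : (ZMod (q₁ * q₂))ˣ) : ZMod (q₁ * q₂)).val : ℕ) : ZMod q₂) =
      (((((e x).2⁻¹ : (ZMod q₂)ˣ) : ZMod q₂).val : ℕ) : ZMod q₂) := by
    rw [ZMod.natCast_val, ZMod.natCast_val, ZMod.cast_id, hinv2]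
    exact (ZMod.castHom_apply _).symm
  -- split eAdd
  rw [eAdd_split q₁ q₂ hco b₂ hb₂ b₁ hb₁]
  have c1 : eAdd q₁ (b₂ * (m * ((x : ZMod (q₁ * q₂)).val : ℤ)
        + n * (((x⁻¹ : (ZMod (q₁ * q₂))ˣ) : ZMod (q₁ * q₂)).val : ℤ))) =
      eAdd q₁ (m * b₂ * (((e x).1 : ZMod q₁).val : ℤ)
        + n * b₂ * ((((e x).1⁻¹ : (ZMod q₁)ˣ) : ZMod q₁).val : ℤ)) := by
    apply eAdd_congr_s10 q₁ h1
    push_cast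
    rw [v1, w1]
    ring
  have c2 : eAdd q₂ (b₁ * (m * ((x : ZMod (q₁ * q₂)).val : ℤ)
        + n * (((x⁻¹ : (ZMod (q₁ * q₂))ˣ) : ZMod (q₁ * q₂)).val : ℤ))) =
      eAdd q₂ (m * b₁ * (((e x).2 : ZMod q₂).val : ℤ)
        + n * b₁ * ((((e x).2⁻¹ : (ZMod q₂)ˣ) : ZMod q₂).val : ℤ)) := by
    apply eAdd_congr_s10 q₂ h2
    push_cast
    rw [v2, w2]
    ring
  rw [c1, c2, ← hpsi, ← mul_assoc]
  rfl
end
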